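/- Let the map P : ℝ^{Z_N} × ℝ^{Z_N} → ℝ^{Z_N} × ℝ^{Z_N} be defined by P(W₁, W₂) = (T(W₂,W₁), D(W₂,W₁)), where T and D are the positive-temperature periodic Pitman maps. Then P is an involution: P(P(W₁,W₂)) = (W₁,W₂). -/

import Mathlib

open Finset Real

variable {N : ℕ}

/-- Cyclic sum `Y_{[i,j]}` (closed-closed), going from `i` around to `j`. -/
noncomputable def cycCC [NeZero N] (Y : ZMod N → ℝ) (i j : ZMod N) : ℝ :=
  ∑ ℓ ∈ Finset.range ((j - i).val + 1), Y (i + ℓ)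

/-- Cyclic sum `Y_{(i,j]}` (open-closed), with `Y_{(i,i]} = 0`. -/
noncomputable def cycOC [NeZero N] (Y : ZMod N → ℝ) (i j : ZMod N) : ℝ :=
  ∑ ℓ ∈ Finset.range ((j - i).val), Y (i + 1 + ℓ)

/-- `Y_ℓ = X₂(ℓ+1) − X₁(ℓ)`. -/
noncomputable def Yv [NeZero N] (X₁ X₂ : ZMod N → ℝ) : ZMod N → ℝ :=
  fun ℓ => X₂ (ℓ + 1) - X₁ ℓ

/-- Positive-temperature periodic Pitman map `T`. -/
noncomputable def Tmap [NeZero N] (X₁ X₂ : ZMod N → ℝ) (i : ZMod N) : ℝ :=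
  X₁ (i - 1) + Real.log ((∑ j : ZMod N, Real.exp (cycCC (Yv X₁ X₂) (i - 1) j)) /
    (∑ j : ZMod N, Real.exp (cycCC (Yv X₁ X₂) i j)))

/-- Positive-temperature periodic Pitman map `D`. -/
noncomputable def Dmap [NeZero N] (X₁ X₂ : ZMod N → ℝ) (i : ZMod N) : ℝ :=
  X₂ (i + 1) + Real.log ((∑ j : ZMod N, Real.exp (cycOC (Yv X₁ X₂) i j)) /
    (∑ j : ZMod N, Real.exp (cycOC (Yv X₁ X₂) (i - 1) j)))

/-- Zero-temperature periodic Pitman map `T̃`. -/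
noncomputable def Tz [NeZero N] (X₁ X₂ : ZMod N → ℝ) (i : ZMod N) : ℝ :=
  X₁ (i - 1) + Finset.univ.sup' Finset.univ_nonempty (fun j => cycCC (Yv X₁ X₂) (i - 1) j)
    - Finset.univ.sup' Finset.univ_nonempty (fun j => cycCC (Yv X₁ X₂) i j)

/-- Zero-temperature periodic Pitman map `D̃`. -/
noncomputable def Dz [NeZero N] (X₁ X₂ : ZMod N → ℝ) (i : ZMod N) : ℝ :=
  X₂ (i + 1) + Finset.univ.sup' Finset.univ_nonempty (fun j => cycOC (Yv X₁ X₂) i j)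
    - Finset.univ.sup' Finset.univ_nonempty (fun j => cycOC (Yv X₁ X₂) (i - 1) j)

lemma natCast_val_zmod [NeZero N] (x : ZMod N) : ((x.val : ZMod N)) = x := by
  simp [ZMod.natCast_val, ZMod.cast_id]

lemma val_sub_one' [NeZero N] {x : ZMod N} (hx : x ≠ 0) : (x - 1).val + 1 = x.val := by
  have h0 : x.val ≠ 0 := by simpa [ZMod.val_eq_zero] using hx
  have h1 : x.val < N := ZMod.val_lt x
  have hx' : x - 1 = ((x.val - 1 : ℕ) : ZMod N) := by
    rw [Nat.cast_sub (by omega : 1 ≤ x.val), natCast_val_zmod, Nat.cast_one]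
  rw [hx', ZMod.val_cast_of_lt (by omega)]
  omega

lemma sum_range_N [NeZero N] (f : ZMod N → ℝ) (c : ZMod N) :
    ∑ ℓ ∈ Finset.range N, f (c + ℓ) = ∑ j : ZMod N, f j := by
  rw [← Equiv.sum_comp (Equiv.addLeft c) f]
  refine Finset.sum_nbij' (fun ℓ => (ℓ : ZMod N)) (fun x => x.val) ?_ ?_ ?_ ?_ ?_ <;>
    (intros; simp_all [ZMod.val_lt, natCast_val_zmod, ZMod.val_cast_of_lt, Nat.mod_eq_of_lt])

lemma sum_shift_one [NeZero N] (f : ZMod N → ℝ) :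
    ∑ j : ZMod N, f (j - 1) = ∑ j : ZMod N, f j :=
  Equiv.sum_comp (Equiv.subRight (1 : ZMod N)) f

lemma sum_shift_add [NeZero N] (f : ZMod N → ℝ) :
    ∑ j : ZMod N, f (j + 1) = ∑ j : ZMod N, f j :=
  Equiv.sum_comp (Equiv.addRight (1 : ZMod N)) f

lemma cycOC_self [NeZero N] (Y : ZMod N → ℝ) (i : ZMod N) : cycOC Y i i = 0 := by
  simp [cycOC]

lemma cycOC_succ [NeZero N] (Y : ZMod N → ℝ) {i j : ZMod N} (h : j + 1 ≠ i) :
    cycOC Y i (j + 1) = cycOC Y i j + Y (j + 1) := by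
  have h0 : j + 1 - i ≠ 0 := fun hc => h (by rwa [sub_eq_zero] at hc)
  have hv : (j - i).val + 1 = (j + 1 - i).val := by
    have := val_sub_one' h0
    simpa [sub_sub, add_sub_cancel_right] using this
  have hc : i + 1 + ((j - i).val : ZMod N) = j + 1 := by
    rw [natCast_val_zmod]; ring
  rw [cycOC, ← hv, Finset.sum_range_succ, hc, ← cycOC]

lemma cycOC_prepend [NeZero N] (Y : ZMod N → ℝ) {i j : ZMod N} (h : j ≠ i) :
    cycOC Y i j = Y (i + 1) + cycOC Y (i + 1) j := by
  have h0 : j - i ≠ 0 := fun hc => h (by rwa [sub_eq_zero] at hc)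
  have hv : (j - (i + 1)).val + 1 = (j - i).val := by
    have := val_sub_one' h0
    simpa [sub_sub] using this
  rw [cycOC, ← hv, Finset.sum_range_succ']
  rw [cycOC]
  have : ∀ ℓ : ℕ, i + 1 + ((ℓ : ℕ) + 1 : ℕ) = i + 1 + 1 + (ℓ : ZMod N) := by
    intro ℓ; push_cast; ring
  simp only [this]
  simp [add_comm]

lemma cycOC_full [NeZero N] (Y : ZMod N → ℝ) (i : ZMod N) :
    Y (i + 1) + cycOC Y (i + 1) i = ∑ j : ZMod N, Y j := by
  have hN : 1 ≤ N := Nat.one_le_iff_ne_zero.mpr (NeZero.ne N)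
  have hv : (i - (i + 1)).val = N - 1 := by
    have : i - (i + 1) = ((N - 1 : ℕ) : ZMod N) := by
      rw [Nat.cast_sub hN]
      simp
    rw [this, ZMod.val_cast_of_lt (by omega)]
  rw [cycOC, hv, ← sum_range_N Y (i + 1)]
  rw [show Finset.range N = Finset.range (N - 1 + 1) from by rw [Nat.sub_add_cancel hN],
    Finset.sum_range_succ' (fun ℓ : ℕ => Y (i + 1 + (ℓ : ZMod N))) (N - 1)]
  have : ∀ ℓ : ℕ, i + 1 + ((ℓ : ℕ) + 1 : ℕ) = i + 1 + 1 + (ℓ : ZMod N) := by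
    intro ℓ; push_cast; ring
  simp only [this]
  push_cast
  ring

lemma cycCC_eq [NeZero N] (Y : ZMod N → ℝ) (i j : ZMod N) :
    cycCC Y i j = Y i + cycOC Y i j := by
  rw [cycCC, Finset.sum_range_succ']
  have : ∀ ℓ : ℕ, i + ((ℓ : ℕ) + 1 : ℕ) = i + 1 + (ℓ : ZMod N) := by
    intro ℓ; push_cast; ring
  simp only [this]
  rw [cycOC]
  push_cast
  ring

noncomputable def Bf [NeZero N] (Y : ZMod N → ℝ) (i : ZMod N) : ℝ :=
  ∑ j : ZMod N, Real.exp (cycOC Y i j)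

lemma Bf_pos [NeZero N] (Y : ZMod N → ℝ) (i : ZMod N) : 0 < Bf Y i :=
  Finset.sum_pos (fun j _ => Real.exp_pos _) Finset.univ_nonempty

lemma Af_eq [NeZero N] (Y : ZMod N → ℝ) (i : ZMod N) :
    (∑ j : ZMod N, Real.exp (cycCC Y i j)) = Real.exp (Y i) * Bf Y i := by
  rw [Bf, Finset.mul_sum]
  exact Finset.sum_congr rfl fun j _ => by rw [cycCC_eq, Real.exp_add]

lemma B_rel [NeZero N] (Y : ZMod N → ℝ) (i : ZMod N) :
    Bf Y i = Real.exp (Y (i + 1)) * Bf Y (i + 1) + 1 - Real.exp (∑ j : ZMod N, Y j) := by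
  have key : ∀ j : ZMod N, Real.exp (cycOC Y i j) =
      Real.exp (Y (i + 1)) * Real.exp (cycOC Y (i + 1) j)
        + (if j = i then 1 - Real.exp (∑ k : ZMod N, Y k) else 0) := by
    intro j
    by_cases hj : j = i
    · subst hj
      rw [cycOC_self, if_pos rfl, ← Real.exp_add, cycOC_full, Real.exp_zero]
      ring
    · rw [if_neg hj, cycOC_prepend Y hj, Real.exp_add, add_zero]
  rw [Bf]
  simp only [key]
  rw [Finset.sum_add_distrib, Finset.sum_ite_eq' Finset.univ i
    (fun _ => 1 - Real.exp (∑ k : ZMod N, Y k))]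
  simp [Bf, Finset.mul_sum]
  ring

noncomputable def Sf [NeZero N] (Y : ZMod N → ℝ) (m : ZMod N) : ℝ :=
  ∑ j : ZMod N, Real.exp (-(cycOC Y m j)) / (Bf Y (j - 1) * Bf Y j)

lemma cycOC_pred_full [NeZero N] (Y : ZMod N → ℝ) (m : ZMod N) :
    cycOC Y m (m - 1) = (∑ j : ZMod N, Y j) - Y m := by
  have := cycOC_full Y (m - 1)
  rw [sub_add_cancel] at this
  linarith

/-- Telescoping identity for `Sf`. -/
lemma T1 [NeZero N] (Y : ZMod N → ℝ) (m : ZMod N) :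
    (1 - Real.exp (∑ j : ZMod N, Y j)) * Sf Y m =
      (1 - Real.exp (∑ j : ZMod N, Y j)) *
        (Real.exp (Y m - ∑ j : ZMod N, Y j) / Bf Y (m - 1)) := by
  set St : ℝ := ∑ j : ZMod N, Y j with hSt
  have hterm : ∀ j : ZMod N,
      (1 - Real.exp St) * (Real.exp (-(cycOC Y m j)) / (Bf Y (j - 1) * Bf Y j)) =
        Real.exp (-(cycOC Y m j)) / Bf Y j
          - Real.exp (-(cycOC Y m (j - 1))) / Bf Y (j - 1)
          - (if j = m then (Real.exp St - 1) * (Real.exp (-(cycOC Y m (m - 1))) / Bf Y (m - 1)) else 0) := by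
    intro j
    have hB : Bf Y (j - 1) = Real.exp (Y j) * Bf Y j + 1 - Real.exp St := by
      have := B_rel Y (j - 1)
      rwa [sub_add_cancel, ← hSt] at this
    have hb1 := (Bf_pos Y (j - 1)).ne'
    have hb2 := (Bf_pos Y j).ne'
    have hE := (Real.exp_pos St).ne'
    have hy := (Real.exp_pos (Y j)).ne'
    by_cases hj : j = m
    · subst hj
      rw [if_pos rfl, cycOC_self, neg_zero, Real.exp_zero, cycOC_pred_full, ← hSt]
      have hx : Real.exp (-(St - Y j)) = Real.exp (Y j) / Real.exp St := by
        rw [neg_sub, Real.exp_sub]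
      rw [hx]
      field_simp
      rw [hB]
      ring
    · rw [if_neg hj]
      have hs : cycOC Y m j = cycOC Y m (j - 1) + Y j := by
        have h1 : (j - 1) + 1 = j := sub_add_cancel j 1
        have h2 : (j - 1) + 1 ≠ m := by rwa [h1]
        have := cycOC_succ Y h2
        rwa [h1] at this
      rw [hs]
      have hx : Real.exp (-(cycOC Y m (j - 1) + Y j)) =
          Real.exp (-(cycOC Y m (j - 1))) / Real.exp (Y j) := by
        rw [Real.exp_neg, Real.exp_add, Real.exp_neg]
        field_simp
      rw [hx]
      field_simp
      rw [hB]
      ring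
  rw [Sf, Finset.mul_sum]
  rw [Finset.sum_congr rfl fun j _ => hterm j]
  rw [Finset.sum_sub_distrib, Finset.sum_sub_distrib]
  rw [Finset.sum_ite_eq' Finset.univ m]
  rw [sum_shift_one (fun j => Real.exp (-(cycOC Y m j)) / Bf Y j)]
  simp only [Finset.mem_univ, if_pos, cycOC_pred_full, ← hSt, neg_sub]
  ring

/-- Step relation for `Sf`. -/
lemma T2 [NeZero N] (Y : ZMod N → ℝ) (m : ZMod N) :
    Sf Y (m + 1) = Real.exp (Y (m + 1)) * Sf Y m +
      Real.exp (Y (m + 1)) * (Real.exp (-(∑ j : ZMod N, Y j)) - 1) /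
        (Bf Y (m - 1) * Bf Y m) := by
  set St : ℝ := ∑ j : ZMod N, Y j with hSt
  have hterm : ∀ j : ZMod N,
      Real.exp (-(cycOC Y (m + 1) j)) / (Bf Y (j - 1) * Bf Y j) =
        Real.exp (Y (m + 1)) * (Real.exp (-(cycOC Y m j)) / (Bf Y (j - 1) * Bf Y j)) +
          (if j = m then Real.exp (Y (m + 1)) * (Real.exp (-St) - 1) / (Bf Y (m - 1) * Bf Y m)
            else 0) := by
    intro j
    by_cases hj : j = m
    · subst hj
      rw [if_pos rfl, cycOC_self]
      have hc : cycOC Y (j + 1) j = St - Y (j + 1) := by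
        have := cycOC_full Y j
        rw [← hSt] at this
        linarith
      rw [hc]
      have hx : Real.exp (-(St - Y (j + 1))) = Real.exp (Y (j + 1)) * Real.exp (-St) := by
        rw [← Real.exp_add]; ring_nf
      rw [hx, neg_zero, Real.exp_zero]
      field_simp
      ring
    · rw [if_neg hj, add_zero]
      have hp : cycOC Y m j = Y (m + 1) + cycOC Y (m + 1) j := cycOC_prepend Y hj
      rw [hp]
      have hx : Real.exp (-(Y (m + 1) + cycOC Y (m + 1) j)) =
          Real.exp (-(cycOC Y (m + 1) j)) / Real.exp (Y (m + 1)) := by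
        rw [Real.exp_neg, Real.exp_add, Real.exp_neg]
        field_simp
      rw [hx]
      have hb1 := (Bf_pos Y (j - 1)).ne'
      have hb2 := (Bf_pos Y j).ne'
      have hE := (Real.exp_pos (Y (m + 1))).ne'
      field_simp
  rw [Sf, Finset.sum_congr rfl fun j _ => hterm j, Finset.sum_add_distrib,
    Finset.sum_ite_eq' Finset.univ m]
  simp only [Finset.mem_univ, if_pos]
  rw [Sf, Finset.mul_sum]

/-- Telescoping product formula for `cycOC Z` when `Z` satisfies the dual relation. -/
lemma star_aux [NeZero N] (Y Z : ZMod N → ℝ)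
    (hZ : ∀ ℓ, Real.exp (Z ℓ) * (Real.exp (Y (ℓ + 1)) * Bf Y (ℓ + 1)) = Bf Y (ℓ - 1)) :
    ∀ n : ℕ, n < N → ∀ i : ZMod N,
      Real.exp (cycOC Z i (i + (n : ZMod N))) *
        (Bf Y (i + (n : ZMod N)) * Bf Y (i + (n : ZMod N) + 1) *
          Real.exp (cycOC Y (i + 1) (i + (n : ZMod N) + 1))) = Bf Y i * Bf Y (i + 1) := by
  intro n
  induction n with
  | zero =>
    intro _ i
    simp [cycOC_self]
  | succ n ih =>
    intro hn i
    have hn' : n < N := by omega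
    have hcast : ((n + 1 : ℕ) : ZMod N) = (n : ZMod N) + 1 := by push_cast; ring
    have hne : i + (n : ZMod N) + 1 ≠ i := by
      intro hc
      have h0 : ((n + 1 : ℕ) : ZMod N) = 0 := by
        have h1 : i + ((n + 1 : ℕ) : ZMod N) = i + 0 := by
          rw [hcast, ← add_assoc, hc, add_zero]
        exact add_left_cancel h1
      have hdvd : N ∣ n + 1 := (ZMod.natCast_eq_zero_iff _ _).mp h0
      have := Nat.le_of_dvd (by omega) hdvd
      omega
    have e1 : cycOC Z i (i + (n : ZMod N) + 1) =
        cycOC Z i (i + (n : ZMod N)) + Z (i + (n : ZMod N) + 1) := cycOC_succ Z hne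
    have hne2 : i + (n : ZMod N) + 1 + 1 ≠ i + 1 := by
      intro hc
      exact hne (add_right_cancel hc)
    have e2 : cycOC Y (i + 1) (i + (n : ZMod N) + 1 + 1) =
        cycOC Y (i + 1) (i + (n : ZMod N) + 1) + Y (i + (n : ZMod N) + 1 + 1) :=
      cycOC_succ Y hne2
    have hZ' := hZ (i + (n : ZMod N) + 1)
    rw [add_sub_cancel_right] at hZ'
    have ihi := ih hn' i
    rw [show i + ((n + 1 : ℕ) : ZMod N) = i + (n : ZMod N) + 1 by rw [hcast, ← add_assoc]]
    rw [e1, Real.exp_add, e2, Real.exp_add]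
    linear_combination
      (Real.exp (cycOC Z i (i + (n : ZMod N))) * Bf Y (i + (n : ZMod N) + 1) *
        Real.exp (cycOC Y (i + 1) (i + (n : ZMod N) + 1))) * hZ' + ihi

lemma star [NeZero N] (Y Z : ZMod N → ℝ)
    (hZ : ∀ ℓ, Real.exp (Z ℓ) * (Real.exp (Y (ℓ + 1)) * Bf Y (ℓ + 1)) = Bf Y (ℓ - 1))
    (i j : ZMod N) :
    Real.exp (cycOC Z i j) * (Bf Y j * Bf Y (j + 1) * Real.exp (cycOC Y (i + 1) (j + 1)))
      = Bf Y i * Bf Y (i + 1) := by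
  have h := star_aux Y Z hZ (j - i).val (ZMod.val_lt _) i
  rwa [natCast_val_zmod, show i + (j - i) = j from by ring] at h

lemma starstar [NeZero N] (Y : ZMod N → ℝ) (i : ZMod N) :
    Bf Y i * Real.exp (Y i) * Sf Y (i + 1) =
      Bf Y (i - 1) * Real.exp (Y (i + 1)) * Sf Y i := by
  set St : ℝ := ∑ j : ZMod N, Y j with hSt
  by_cases hE : Real.exp St = 1
  · have hB : Bf Y (i - 1) = Real.exp (Y i) * Bf Y i := by
      have := B_rel Y (i - 1)
      rw [sub_add_cancel, ← hSt, hE] at this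
      linarith
    have hT2 := T2 Y i
    rw [← hSt, Real.exp_neg, hE, inv_one, sub_self, mul_zero, zero_div, add_zero] at hT2
    rw [hT2, hB]
    ring
  · have hsub : (1 : ℝ) - Real.exp St ≠ 0 := fun h => hE (by linarith)
    have h1 : Sf Y (i + 1) = Real.exp (Y (i + 1) - St) / Bf Y i := by
      have := T1 Y (i + 1)
      rw [← hSt, add_sub_cancel_right] at this
      exact mul_left_cancel₀ hsub this
    have h2 : Sf Y i = Real.exp (Y i - St) / Bf Y (i - 1) := by
      have := T1 Y i
      rw [← hSt] at this
      exact mul_left_cancel₀ hsub this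
    rw [h1, h2, Real.exp_sub, Real.exp_sub]
    have hb1 := (Bf_pos Y i).ne'
    have hb2 := (Bf_pos Y (i - 1)).ne'
    have hE' := (Real.exp_pos St).ne'
    field_simp

lemma key_lemma [NeZero N] (Y Z : ZMod N → ℝ)
    (hZ : ∀ ℓ, Real.exp (Z ℓ) * (Real.exp (Y (ℓ + 1)) * Bf Y (ℓ + 1)) = Bf Y (ℓ - 1))
    (i : ZMod N) :
    Bf Z i * (Real.exp (Y i) * Bf Y i) = Bf Z (i - 1) * (Real.exp (Y (i + 1)) * Bf Y (i + 1)) := by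
  have hBZ : ∀ m, Bf Z m = Bf Y m * Bf Y (m + 1) * Sf Y (m + 1) := by
    intro m
    have hterm : ∀ j : ZMod N, Real.exp (cycOC Z m j) =
        Bf Y m * Bf Y (m + 1) *
          (Real.exp (-(cycOC Y (m + 1) (j + 1))) / (Bf Y j * Bf Y (j + 1))) := by
      intro j
      have hst := star Y Z hZ m j
      have hb1 := (Bf_pos Y j).ne'
      have hb2 := (Bf_pos Y (j + 1)).ne'
      have hc := (Real.exp_pos (cycOC Y (m + 1) (j + 1))).ne'
      rw [Real.exp_neg]
      field_simp
      linear_combination hst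
    rw [Bf, Finset.sum_congr rfl fun j _ => hterm j, ← Finset.mul_sum]
    congr 1
    rw [Sf, ← sum_shift_add (fun x => Real.exp (-(cycOC Y (m + 1) x)) / (Bf Y (x - 1) * Bf Y x))]
    exact Finset.sum_congr rfl fun j _ => by rw [add_sub_cancel_right]
  have hss := starstar Y i
  rw [hBZ i, hBZ (i - 1), sub_add_cancel]
  linear_combination (Bf Y i * Bf Y (i + 1)) * hss


lemma exp_Tmap [NeZero N] (X₁ X₂ : ZMod N → ℝ) (i : ZMod N) :
    Real.exp (Tmap X₁ X₂ i) = Real.exp (X₁ (i - 1)) *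
      ((Real.exp (Yv X₁ X₂ (i - 1)) * Bf (Yv X₁ X₂) (i - 1)) /
        (Real.exp (Yv X₁ X₂ i) * Bf (Yv X₁ X₂) i)) := by
  rw [Tmap, Af_eq, Af_eq, Real.exp_add,
    Real.exp_log (div_pos (mul_pos (Real.exp_pos _) (Bf_pos _ _))
      (mul_pos (Real.exp_pos _) (Bf_pos _ _)))]

lemma exp_Dmap [NeZero N] (X₁ X₂ : ZMod N → ℝ) (i : ZMod N) :
    Real.exp (Dmap X₁ X₂ i) = Real.exp (X₂ (i + 1)) *
      (Bf (Yv X₁ X₂) i / Bf (Yv X₁ X₂) (i - 1)) := by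
  rw [Dmap, show (∑ j : ZMod N, Real.exp (cycOC (Yv X₁ X₂) i j)) = Bf (Yv X₁ X₂) i from rfl,
    show (∑ j : ZMod N, Real.exp (cycOC (Yv X₁ X₂) (i - 1) j)) = Bf (Yv X₁ X₂) (i - 1) from rfl,
    Real.exp_add, Real.exp_log (div_pos (Bf_pos _ _) (Bf_pos _ _))]

lemma hZ_rel [NeZero N] (W₁ W₂ : ZMod N → ℝ) (ℓ : ZMod N) :
    Real.exp (Yv (Dmap W₂ W₁) (Tmap W₂ W₁) ℓ) *
      (Real.exp (Yv W₂ W₁ (ℓ + 1)) * Bf (Yv W₂ W₁) (ℓ + 1)) = Bf (Yv W₂ W₁) (ℓ - 1) := by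
  have hT := exp_Tmap W₂ W₁ (ℓ + 1)
  have hD := exp_Dmap W₂ W₁ ℓ
  simp only [add_sub_cancel_right] at hT
  rw [show Yv (Dmap W₂ W₁) (Tmap W₂ W₁) ℓ = Tmap W₂ W₁ (ℓ + 1) - Dmap W₂ W₁ ℓ from rfl,
    Real.exp_sub, hT, hD]
  have he : Real.exp (W₂ ℓ) * Real.exp (Yv W₂ W₁ ℓ) = Real.exp (W₁ (ℓ + 1)) := by
    rw [← Real.exp_add, show Yv W₂ W₁ ℓ = W₁ (ℓ + 1) - W₂ ℓ from rfl]
    ring_nf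
  have hb0 := (Bf_pos (Yv W₂ W₁) (ℓ - 1)).ne'
  have hb1 := (Bf_pos (Yv W₂ W₁) ℓ).ne'
  have hb2 := (Bf_pos (Yv W₂ W₁) (ℓ + 1)).ne'
  have he1 := (Real.exp_pos (Yv W₂ W₁ ℓ)).ne'
  have he2 := (Real.exp_pos (Yv W₂ W₁ (ℓ + 1))).ne'
  have he3 := (Real.exp_pos (W₁ (ℓ + 1))).ne'
  have he4 := (Real.exp_pos (W₂ ℓ)).ne'
  field_simp
  linear_combination he


/-- The map `P(W₁,W₂) = (T(W₂,W₁), D(W₂,W₁))` is an involution: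
`P(P(W₁,W₂)) = (W₁,W₂)`. -/
theorem pitman_involution [NeZero N] (W₁ W₂ : ZMod N → ℝ) :
    Tmap (Dmap W₂ W₁) (Tmap W₂ W₁) = W₁ ∧
    Dmap (Dmap W₂ W₁) (Tmap W₂ W₁) = W₂ := by
  have hZ := hZ_rel W₁ W₂
  set Y := Yv W₂ W₁ with hY
  set Z := Yv (Dmap W₂ W₁) (Tmap W₂ W₁) with hZdef
  have key := key_lemma Y Z hZ
  have hbZ : ∀ m, (0:ℝ) < Bf Z m := Bf_pos Z
  have hbY : ∀ m, (0:ℝ) < Bf Y m := Bf_pos Y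
  constructor
  · funext i
    have hR : (Real.exp (Z (i - 1)) * Bf Z (i - 1)) / (Real.exp (Z i) * Bf Z i) =
        Bf Y (i - 1 - 1) / Bf Y (i - 1) := by
      have h1 := hZ (i - 1)
      rw [sub_add_cancel] at h1
      have h0 := hZ i
      have k := key i
      have hb1 := (hbZ i).ne'
      have hb2 := (hbZ (i - 1)).ne'
      have hb3 := (hbY (i - 1)).ne'
      have he0 := (Real.exp_pos (Z i)).ne'
      have he1 := (Real.exp_pos (Z (i - 1))).ne'
      have hey := (Real.exp_pos (Y i)).ne'
      have hey1 := (Real.exp_pos (Y (i + 1))).ne'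
      have hby := (hbY i).ne'
      have hby1 := (hbY (i + 1)).ne'
      field_simp
      linear_combination (Real.exp (Z i) * Bf Z i) * h1 - (Real.exp (Z (i - 1)) * Bf Z (i - 1)) * h0
        - (Real.exp (Z (i - 1)) * Real.exp (Z i)) * k
    rw [Tmap, Af_eq, Af_eq, ← hZdef, hR, Dmap, ← hY,
      show (∑ j : ZMod N, Real.exp (cycOC Y (i - 1) j)) = Bf Y (i - 1) from rfl,
      show (∑ j : ZMod N, Real.exp (cycOC Y (i - 1 - 1) j)) = Bf Y (i - 1 - 1) from rfl,
      sub_add_cancel, Real.log_div (hbY _).ne' (hbY _).ne',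
      Real.log_div (hbY _).ne' (hbY _).ne']
    ring
  · funext i
    have hR : Bf Z i / Bf Z (i - 1) =
        (Real.exp (Y (i + 1)) * Bf Y (i + 1)) / (Real.exp (Y i) * Bf Y i) := by
      have k := key i
      have hb2 := (hbZ (i - 1)).ne'
      have hey := (Real.exp_pos (Y i)).ne'
      have hby := (hbY i).ne'
      field_simp
      linear_combination k
    rw [Dmap, ← hZdef,
      show (∑ j : ZMod N, Real.exp (cycOC Z i j)) = Bf Z i from rfl,
      show (∑ j : ZMod N, Real.exp (cycOC Z (i - 1) j)) = Bf Z (i - 1) from rfl,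
      hR, Tmap, Af_eq, Af_eq, ← hY, add_sub_cancel_right,
      Real.log_div (mul_pos (Real.exp_pos _) (hbY _)).ne' (mul_pos (Real.exp_pos _) (hbY _)).ne',
      Real.log_div (mul_pos (Real.exp_pos _) (hbY _)).ne' (mul_pos (Real.exp_pos _) (hbY _)).ne']
    ring
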